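/- For any a₁, a₂ ∈ F_{2^r} with a₁ ≠ a₂ and any b₁, b₂ ∈ F_{2^n}, write a = a₁ + a₂, a' = a^{2^(m-1)}, and b = b₁ + b₂ = β₁·β₂ with β₁ in the unit circle U and β₂ ∈ F_{2^m} (β₂ ≠ 0 when b ≠ 0; the case b = 0 gives N = 0 solutions), and let N be the number of u ∈ U with a' + β₂·(β₁u + (β₁u)^{2^m}) = 0. Then ⟨B_{a₁,b₁}, B_{a₂,b₂}⟩ = −1/2^m if N = 0, and ⟨B_{a₁,b₁}, B_{a₂,b₂}⟩ = 1/2^m if N = 2. -/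

import Mathlib

set_option linter.unusedSectionVars false
set_option maxHeartbeats 1000000

noncomputable section

/-- The relative trace `Tr_k^l` from `F_{2^l}` to `F_{2^k}`, written as a function on an
ambient field of characteristic two: `x ↦ x + x^(2^k) + x^(2^(2k)) + ⋯ + x^(2^(l-k))`. -/
def relTr {F : Type*} [Field F] (k l : ℕ) (x : F) : F :=
  ∑ i ∈ Finset.range (l / k), x ^ 2 ^ (k * i)

/-- `(-1)^y` for `y ∈ F_2 ⊆ F`, identifying `F_2` with `{0,1}`. -/
def sgn {F : Type*} [Field F] [DecidableEq F] (y : F) : ℝ :=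
  if y = 0 then 1 else -1

/-- The vector `B_{a,b} ∈ ℝ^F`, whose `x`-th coordinate is
`(1/2^m)·(-1)^(Tr_1^m(a·x^(2^m+1)) + Tr_1^n(b·x))`. -/
def Bvec {F : Type*} [Field F] [DecidableEq F] (m n : ℕ) (a b : F) : F → ℝ :=
  fun x => (1 / 2 ^ m : ℝ) * sgn (relTr 1 m (a * x ^ (2 ^ m + 1)) + relTr 1 n (b * x))

/-- The standard basis vector `e_x` of `ℝ^F`. -/
def evec {F : Type*} [DecidableEq F] (x : F) : F → ℝ :=
  fun y => if y = x then 1 else 0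

open Finset

lemma card_pow_eq_one_of_dvd {G : Type*} [Group G] [Fintype G] [IsCyclic G] [DecidableEq G]
    {d : ℕ} (hd : d ∣ Fintype.card G) (hd0 : 0 < d) :
    #{a : G | a ^ d = 1} = d := by
  refine le_antisymm (IsCyclic.card_pow_eq_one_le hd0) ?_
  obtain ⟨g, hg⟩ := IsCyclic.exists_generator (α := G)
  have hog : orderOf g = Fintype.card G := by
    rw [orderOf_eq_card_of_forall_mem_zpowers hg, Nat.card_eq_fintype_card]
  set c := Fintype.card G with hc
  have hc0 : 0 < c := Fintype.card_pos
  set h := g ^ (c / d) with hh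
  have horder : orderOf h = d := by
    rw [hh, orderOf_pow, hog, Nat.gcd_eq_right (Nat.div_dvd_of_dvd hd), Nat.div_div_self hd hc0.ne']
  have hd1 : h ^ d = 1 := by rw [hh, ← pow_mul, Nat.div_mul_cancel hd, pow_card_eq_one]
  have : (range d).card ≤ #{a : G | a ^ d = 1} := by
    apply Finset.card_le_card_of_injOn (fun k => h ^ k)
    · intro k hk
      rw [Finset.mem_coe]; simp only [mem_filter, mem_univ, true_and, ← pow_mul]
      rw [mul_comm, pow_mul, hd1, one_pow]
    · intro x hx y hy hxy
      exact pow_injOn_Iio_orderOf (by simpa [horder] using mem_range.1 hx)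
        (by simpa [horder] using mem_range.1 hy) hxy
  simpa using this

lemma card_pow_eq_one_field {F : Type*} [Field F] [Fintype F] [DecidableEq F]
    {d : ℕ} (hd : d ∣ Fintype.card F - 1) (hd0 : 0 < d) :
    #{x : F | x ^ d = 1} = d := by
  classical
  have key : #{u : Fˣ | u ^ d = 1} = d :=
    card_pow_eq_one_of_dvd (by rwa [Fintype.card_units]) hd0
  have heq : #{u : Fˣ | u ^ d = 1} = #{x : F | x ^ d = 1} := by
    refine Finset.card_bij (fun u _ => (u : F)) ?_ ?_ ?_
    · intro u hu
      simp only [mem_filter, mem_univ, true_and] at hu ⊢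
      rw [← Units.val_pow_eq_pow_val, hu, Units.val_one]
    · intro u _ v _ h; exact Units.ext h
    · intro x hx
      simp only [mem_filter, mem_univ, true_and] at hx
      have hx0 : x ≠ 0 := by rintro rfl; simp [zero_pow hd0.ne'] at hx
      refine ⟨Units.mk0 x hx0, ?_, rfl⟩
      simp only [mem_filter, mem_univ, true_and]
      ext; simpa using hx
  rw [← heq, key]

section TraceLemmas

variable {F : Type*} [Field F] [DecidableEq F]

lemma relTr_eq (l : ℕ) (x : F) : relTr 1 l x = ∑ i ∈ range l, x ^ 2 ^ i := by
  simp [relTr]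

lemma relTr_zero (l : ℕ) : relTr 1 l (0 : F) = 0 := by
  simp [relTr_eq, zero_pow (pow_ne_zero _ (two_ne_zero))]

lemma relTr_add [CharP F 2] (l : ℕ) (x y : F) :
    relTr 1 l (x + y) = relTr 1 l x + relTr 1 l y := by
  simp only [relTr_eq, ← Finset.sum_add_distrib]
  exact Finset.sum_congr rfl fun i _ => add_pow_char_pow x y 2 i

lemma sum_shift {l : ℕ} {z : F} (hz : z ^ 2 ^ l = z) :
    ∑ i ∈ range l, z ^ 2 ^ (i + 1) = ∑ i ∈ range l, z ^ 2 ^ i := by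
  have h1 := Finset.sum_range_succ (fun i => z ^ 2 ^ i) l
  have h2 := Finset.sum_range_succ' (fun i => z ^ 2 ^ i) l
  rw [h1] at h2
  rw [hz] at h2
  simpa using h2.symm

lemma relTr_sq [CharP F 2] {l : ℕ} {z : F} (hz : z ^ 2 ^ l = z) :
    relTr 1 l z ^ 2 = relTr 1 l z := by
  rw [relTr_eq, sum_pow_char]
  rw [← sum_shift hz]
  exact Finset.sum_congr rfl fun i _ => by rw [← pow_mul, pow_succ]

lemma relTr_sq_arg [CharP F 2] {l : ℕ} {z : F} (hz : z ^ 2 ^ l = z) :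
    relTr 1 l (z ^ 2) = relTr 1 l z := by
  rw [relTr_eq, relTr_eq, ← sum_shift hz]
  exact Finset.sum_congr rfl fun i _ => by rw [← pow_mul, pow_succ, mul_comm (2^i) 2, pow_mul]

lemma boolean_of_sq {w : F} (hw : w ^ 2 = w) : w = 0 ∨ w = 1 := by
  rcases mul_eq_zero.1 (show w * (w - 1) = 0 by linear_combination hw) with h | h
  · exact Or.inl h
  · exact Or.inr (by linear_combination h)

lemma boolean_add [CharP F 2] {u v : F} (hu : u = 0 ∨ u = 1) (hv : v = 0 ∨ v = 1) :
    u + v = 0 ∨ u + v = 1 := by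
  have h2 : (1 : F) + 1 = 0 := CharTwo.add_self_eq_zero 1
  rcases hu with rfl | rfl <;> rcases hv with rfl | rfl <;> simp [h2]

lemma sgn_zero : sgn (0 : F) = 1 := by simp [sgn]

lemma sgn_add [CharP F 2] {u v : F} (hu : u = 0 ∨ u = 1) (hv : v = 0 ∨ v = 1) :
    sgn (u + v) = sgn u * sgn v := by
  have h2 : (1 : F) + 1 = 0 := CharTwo.add_self_eq_zero 1
  rcases hu with rfl | rfl <;> rcases hv with rfl | rfl <;>
    simp [sgn, h2, one_ne_zero]

lemma sgn_add_one [CharP F 2] {w : F} (hw : w = 0 ∨ w = 1) :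
    sgn (w + 1) = - sgn w := by
  have h2 : (1 : F) + 1 = 0 := CharTwo.add_self_eq_zero 1
  rcases hw with rfl | rfl <;> simp [sgn, h2, one_ne_zero]

lemma relTr_split (m : ℕ) (z : F) :
    relTr 1 (2 * m) z = relTr 1 m z + relTr 1 m (z ^ 2 ^ m) := by
  rw [relTr_eq, relTr_eq, relTr_eq, two_mul, Finset.sum_range_add]
  congr 1
  refine Finset.sum_congr rfl fun i _ => ?_
  rw [← pow_mul, ← pow_add]

lemma pow_fix_mul {x : F} {r : ℕ} (t : ℕ) (h : x ^ 2 ^ r = x) : x ^ 2 ^ (t * r) = x := by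
  induction t with
  | zero => simp
  | succ t ih =>
    rw [add_mul, one_mul, pow_add, pow_mul, ih, h]

open Polynomial in
lemma exists_tr_ne_zero [Fintype F] {m : ℕ} (hm : 0 < m)
    (hY : #{y : F | y ^ 2 ^ m = y} = 2 ^ m) :
    ∃ z : F, z ^ 2 ^ m = z ∧ relTr 1 m z ≠ 0 := by
  by_contra h
  push_neg at h
  set P : F[X] := ∑ i ∈ range m, (X : F[X]) ^ 2 ^ i with hP
  have hPne : P ≠ 0 := by
    intro h0
    have hco : P.coeff (2 ^ (m - 1)) = 1 := by
      rw [hP, Polynomial.finset_sum_coeff]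
      have : ∀ i ∈ range m, ((X : F[X]) ^ 2 ^ i).coeff (2 ^ (m - 1)) =
          if i = m - 1 then 1 else 0 := by
        intro i _
        rw [coeff_X_pow]
        congr 1
        simp only [eq_iff_iff]
        constructor
        · intro he; exact (Nat.pow_right_injective le_rfl he).symm
        · rintro rfl; rfl
      rw [Finset.sum_congr rfl this, Finset.sum_ite_eq']
      simp [Nat.sub_lt hm one_pos]
    rw [h0] at hco
    simp at hco
  have hdeg : P.natDegree ≤ 2 ^ (m - 1) := by
    apply Polynomial.natDegree_sum_le_of_forall_le
    intro i hi
    rw [Polynomial.natDegree_X_pow]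
    exact Nat.pow_le_pow_right (by norm_num) (by have := mem_range.1 hi; omega)
  have hsub : ({y : F | y ^ 2 ^ m = y} : Finset F) ⊆ P.roots.toFinset := by
    intro y hy
    simp only [mem_filter, mem_univ, true_and] at hy
    rw [Multiset.mem_toFinset, Polynomial.mem_roots hPne]
    have := h y hy
    rw [relTr_eq] at this
    simp only [IsRoot.def, hP, Polynomial.eval_finset_sum]
    simpa using this
  have hcard := Finset.card_le_card hsub
  rw [hY] at hcard
  have : (2 : ℕ) ^ m ≤ 2 ^ (m - 1) :=
    hcard.trans ((Multiset.toFinset_card_le _).trans ((Polynomial.card_roots' P).trans hdeg))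
  have hlt : (2 : ℕ) ^ (m - 1) < 2 ^ m := Nat.pow_lt_pow_right one_lt_two (by omega)
  omega

lemma char_sum [Fintype F] [CharP F 2] {m : ℕ} (hm : 0 < m)
    (hY : #{y : F | y ^ 2 ^ m = y} = 2 ^ m) {c : F} (hc : c ^ 2 ^ m = c) :
    ∑ y ∈ ({y : F | y ^ 2 ^ m = y} : Finset F), sgn (relTr 1 m (c * y)) =
      if c = 0 then (2 ^ m : ℝ) else 0 := by
  rcases eq_or_ne c 0 with rfl | hc0
  · simp only [if_pos rfl, zero_mul, relTr_zero, sgn_zero, Finset.sum_const, nsmul_eq_mul, mul_one]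
    rw [hY]; push_cast; ring
  · rw [if_neg hc0]
    obtain ⟨z, hz, hzt⟩ := exists_tr_ne_zero hm hY
    set y₀ : F := c⁻¹ * z with hy₀
    have hy₀Y : y₀ ^ 2 ^ m = y₀ := by
      rw [hy₀, mul_pow, hz, inv_pow, hc]
    have hcy₀ : c * y₀ = z := by rw [hy₀, ← mul_assoc, mul_inv_cancel₀ hc0, one_mul]
    have htr1 : relTr 1 m (c * y₀) = 1 := by
      rw [hcy₀]
      rcases boolean_of_sq (relTr_sq hz) with h0 | h1
      · exact absurd h0 hzt
      · exact h1
    have hy₀0 : y₀ ≠ 0 := by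
      intro h0
      rw [h0, mul_zero, relTr_zero] at htr1
      exact one_ne_zero htr1.symm
    apply Finset.sum_involution (fun y _ => y + y₀)
    · intro y hy
      simp only [mem_filter, mem_univ, true_and] at hy
      have hcyq : (c * y) ^ 2 ^ m = c * y := by rw [mul_pow, hc, hy]
      rw [mul_add, relTr_add, htr1, sgn_add_one (boolean_of_sq (relTr_sq hcyq))]
      ring
    · intro y _ _
      simp [hy₀0]
    · intro y hy
      simp only [mem_filter, mem_univ, true_and] at hy ⊢
      rw [add_pow_char_pow, hy, hy₀Y]
    · intro y _
      rw [add_assoc, CharTwo.add_self_eq_zero, add_zero]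

end TraceLemmas
section MainSum

variable {F : Type*} [Field F] [Fintype F] [DecidableEq F]

lemma main_sum [CharP F 2] {m : ℕ} (hm : 0 < m)
    (hF : Fintype.card F = 2 ^ (2 * m)) (a b : F) (ha : a ^ 2 ^ m = a) :
    ∑ x : F, sgn (relTr 1 m (a * x ^ (2 ^ m + 1)) + relTr 1 (2 * m) (b * x)) =
      2 ^ m * (#{u : F | u ^ (2 ^ m + 1) = 1 ∧
        a ^ 2 ^ (m - 1) + (b * u + (b * u) ^ 2 ^ m) = 0} : ℝ) - 2 ^ m := by
  have hq1 : (1 : ℕ) ≤ 2 ^ m := Nat.one_le_two_pow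
  have hq2 : (2 : ℕ) ≤ 2 ^ m := by
    calc (2:ℕ) = 2 ^ 1 := (pow_one 2).symm
    _ ≤ 2 ^ m := Nat.pow_le_pow_right (by norm_num) hm
  have hFrobn : ∀ x : F, x ^ 2 ^ (2 * m) = x := fun x => by
    rw [← hF]; exact FiniteField.pow_card x
  have hFrob : ∀ x : F, x ^ (2 ^ m * 2 ^ m) = x := fun x => by
    rw [← pow_add, ← two_mul]; exact hFrobn x
  set a' := a ^ 2 ^ (m - 1) with ha'
  have ha'sq : a' ^ 2 = a := by
    rw [ha', ← pow_mul, ← pow_succ, Nat.sub_add_cancel hm, ha]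
  have ha'm : a' ^ 2 ^ m = a' := by
    rw [ha', ← pow_mul, mul_comm, pow_mul, ha]
  -- cardinalities
  have hcard1 : Fintype.card F - 1 = (2 ^ m + 1) * (2 ^ m - 1) := by
    rw [hF, mul_comm 2 m, pow_mul]
    have := Nat.sq_sub_sq (2 ^ m) 1
    simpa [sq] using this
  have hUcard : #{u : F | u ^ (2 ^ m + 1) = 1} = 2 ^ m + 1 :=
    card_pow_eq_one_field (by rw [hcard1]; exact Dvd.intro _ rfl) (by omega)
  have hYscard : #{y : F | y ^ (2 ^ m - 1) = 1} = 2 ^ m - 1 :=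
    card_pow_eq_one_field (by rw [hcard1]; exact Dvd.intro_left _ rfl) (by omega)
  have h0notin : (0 : F) ∉ ({y : F | y ^ (2 ^ m - 1) = 1} : Finset F) := by
    simp only [mem_filter, mem_univ, true_and]
    rw [zero_pow (by omega : 2 ^ m - 1 ≠ 0)]
    exact fun h => one_ne_zero h.symm
  have hYeq : ({y : F | y ^ 2 ^ m = y} : Finset F) =
      insert 0 ({y : F | y ^ (2 ^ m - 1) = 1} : Finset F) := by
    ext y
    simp only [mem_filter, mem_univ, true_and, mem_insert]
    constructor
    · intro hy
      rcases eq_or_ne y 0 with rfl | h0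
      · exact Or.inl rfl
      · right
        have h1 : y ^ (2 ^ m - 1) * y = 1 * y := by
          rw [← pow_succ, Nat.sub_add_cancel hq1, hy, one_mul]
        exact mul_right_cancel₀ h0 h1
    · rintro (rfl | h1)
      · rw [zero_pow (by omega : (2:ℕ) ^ m ≠ 0)]
      · rw [← Nat.sub_add_cancel hq1, pow_succ, h1, one_mul]
  have hYcard : #{y : F | y ^ 2 ^ m = y} = 2 ^ m := by
    rw [hYeq, Finset.card_insert_of_notMem h0notin, hYscard]; omega
  -- the function
  set f : F → ℝ := fun x => sgn (relTr 1 m (a * x ^ (2 ^ m + 1)) + relTr 1 (2 * m) (b * x))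
    with hf
  have hf0 : f 0 = 1 := by
    rw [hf]
    simp only [zero_pow (by omega : 2 ^ m + 1 ≠ 0), mul_zero, relTr_zero, add_zero, sgn_zero]
  -- the image decomposition
  set Uf : Finset F := {u : F | u ^ (2 ^ m + 1) = 1} with hUf
  set Ysf : Finset F := {y : F | y ^ (2 ^ m - 1) = 1} with hYsf
  have hUne : ∀ u ∈ Uf, u ≠ 0 := by
    intro u hu
    simp only [hUf, mem_filter, mem_univ, true_and] at hu
    intro h0; rw [h0, zero_pow (by omega : 2 ^ m + 1 ≠ 0)] at hu
    exact one_ne_zero hu.symm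
  have hYne : ∀ y ∈ Ysf, y ≠ 0 := by
    intro y hy h0; rw [h0] at hy; exact h0notin hy
  have hinj : ∀ p ∈ Uf ×ˢ Ysf, ∀ p' ∈ Uf ×ˢ Ysf,
      p.1 * p.2 = p'.1 * p'.2 → p = p' := by
    rintro ⟨u, y⟩ hp ⟨u', y'⟩ hp' h
    rw [Finset.mem_product] at hp hp'
    obtain ⟨hu, hy⟩ := hp
    obtain ⟨hu', hy'⟩ := hp'
    have hu0 := hUne _ hu; have hu'0 := hUne _ hu'
    have hy0 := hYne _ hy; have hy'0 := hYne _ hy'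
    simp only [hUf, mem_filter, mem_univ, true_and] at hu hu'
    simp only [hYsf, mem_filter, mem_univ, true_and] at hy hy'
    set w : F := u * u'⁻¹ with hw
    have hweq : w = y' * y⁻¹ := by
      rw [hw]; field_simp at h ⊢; linear_combination h
    have hw1 : w ^ (2 ^ m + 1) = 1 := by
      rw [hw, mul_pow, hu, inv_pow, hu', one_mul, inv_one]
    have hw2 : w ^ (2 ^ m - 1) = 1 := by
      rw [hweq, mul_pow, hy', inv_pow, hy, one_mul, inv_one]
    have hwsq : w ^ 2 = 1 := by
      have : w ^ (2 ^ m - 1) * w ^ 2 = w ^ (2 ^ m + 1) := by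
        rw [← pow_add]; congr 1; omega
      rw [hw2, one_mul] at this; rw [this, hw1]
    have h2 : (2 : F) = 0 := CharTwo.two_eq_zero
    have hwone : w = 1 := by
      have hz : (w + 1) * (w + 1) = 0 := by linear_combination hwsq + (w + 1) * h2
      have := mul_self_eq_zero.1 hz
      linear_combination this - h2
    have huu : u = u' := by
      have := hwone; rw [hw] at this; field_simp at this; exact this
    subst huu
    have hyy : y = y' := by
      exact mul_left_cancel₀ hu0 h
    subst hyy; rfl
  have himg : (Uf ×ˢ Ysf).image (fun p => p.1 * p.2) = Finset.univ.erase (0 : F) := by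
    apply Finset.eq_of_subset_of_card_le
    · intro x hx
      rw [Finset.mem_image] at hx
      obtain ⟨⟨u, y⟩, hp, rfl⟩ := hx
      rw [Finset.mem_product] at hp
      exact Finset.mem_erase.2 ⟨mul_ne_zero (hUne _ hp.1) (hYne _ hp.2), Finset.mem_univ _⟩
    · rw [Finset.card_erase_of_mem (Finset.mem_univ _), Finset.card_image_of_injOn ?_,
        Finset.card_product]
      · rw [hUcard, hYscard, ← hcard1, Finset.card_univ]
      · intro p hp p' hp' h
        exact hinj p (by simpa using hp) p' (by simpa using hp') h
  -- inner sums
  have inner_eq : ∀ u ∈ Uf, ∑ y ∈ Ysf, f (u * y) =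
      (if a' + (b * u + (b * u) ^ 2 ^ m) = 0 then (2 ^ m : ℝ) else 0) - 1 := by
    intro u hu
    have hu1 : u ^ (2 ^ m + 1) = 1 := by simpa [hUf] using hu
    set c : F := a' + (b * u + (b * u) ^ 2 ^ m) with hc
    have hcq : c ^ 2 ^ m = c := by
      rw [hc, add_pow_char_pow, add_pow_char_pow, ha'm, ← pow_mul, hFrob]
      ring
    have hstep : ∀ y ∈ Ysf, f (u * y) = sgn (relTr 1 m (c * y)) := by
      intro y hy
      have hy1 : y ^ (2 ^ m - 1) = 1 := by simpa [hYsf] using hy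
      have hyq : y ^ 2 ^ m = y := by
        rw [← Nat.sub_add_cancel hq1, pow_succ, hy1, one_mul]
      have huy : (u * y) ^ (2 ^ m + 1) = y ^ 2 := by
        rw [mul_pow, hu1, one_mul, pow_succ, hyq, sq]
      have h1 : relTr 1 m (a * (u * y) ^ (2 ^ m + 1)) = relTr 1 m (a' * y) := by
        rw [huy]
        have : a * y ^ 2 = (a' * y) ^ 2 := by rw [mul_pow, ha'sq]
        rw [this, relTr_sq_arg (by rw [mul_pow, ha'm, hyq])]
      have h2 : relTr 1 (2 * m) (b * (u * y)) = relTr 1 m ((b * u + (b * u) ^ 2 ^ m) * y) := by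
        rw [relTr_split]
        have hbp : (b * (u * y)) ^ 2 ^ m = (b * u) ^ 2 ^ m * y := by
          rw [← mul_assoc, mul_pow, hyq]
        rw [hbp, ← relTr_add]
        congr 1; ring
      rw [hf]
      simp only
      rw [h1, h2, ← relTr_add, hc]
      congr 2; ring
    rw [Finset.sum_congr rfl hstep]
    have hsum := char_sum (F := F) hm hYcard hcq
    rw [hYeq] at hsum
    rw [Finset.sum_insert h0notin, mul_zero, relTr_zero, sgn_zero] at hsum
    linarith [hsum]
  -- put it together
  have hS : ∑ x : F, f x = f 0 + ∑ x ∈ Finset.univ.erase 0, f x :=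
    (Finset.add_sum_erase _ f (Finset.mem_univ 0)).symm
  rw [hS, hf0, ← himg, Finset.sum_image hinj, Finset.sum_product,
    Finset.sum_congr rfl inner_eq, Finset.sum_sub_distrib, Finset.sum_const, Finset.sum_ite,
    Finset.sum_const, Finset.sum_const_zero, hUcard]
  have hNcard : Finset.filter (fun u => a' + (b * u + (b * u) ^ 2 ^ m) = 0) Uf =
      ({u : F | u ^ (2 ^ m + 1) = 1 ∧
        a ^ 2 ^ (m - 1) + (b * u + (b * u) ^ 2 ^ m) = 0} : Finset F) := by
    rw [hUf, Finset.filter_filter]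
  rw [hNcard]
  push_cast
  ring

end MainSum

theorem stmt12 (t r : ℕ) (ht : 0 < t) (hr : 0 < r) (m n : ℕ) (hm : m = t * r)
    (hn : n = 2 * m) (F : Type*) [Field F] [Fintype F] [DecidableEq F]
    (hF : Fintype.card F = 2 ^ n)
    (a₁ a₂ : F) (ha₁ : a₁ ^ 2 ^ r = a₁) (ha₂ : a₂ ^ 2 ^ r = a₂) (hne : a₁ ≠ a₂)
    (b₁ b₂ : F) (β₁ β₂ : F) (hβ₁ : β₁ ^ (2 ^ m + 1) = 1) (hβ₂ : β₂ ^ 2 ^ m = β₂)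
    (hb : b₁ + b₂ = β₁ * β₂) (hβ₂0 : b₁ + b₂ ≠ 0 → β₂ ≠ 0) :
    ({u : F | u ^ (2 ^ m + 1) = 1 ∧
        (a₁ + a₂) ^ 2 ^ (m - 1) + β₂ * (β₁ * u + (β₁ * u) ^ 2 ^ m) = 0}.ncard = 0 →
      ∑ x : F, Bvec m n a₁ b₁ x * Bvec m n a₂ b₂ x = -(1 / 2 ^ m)) ∧
    ({u : F | u ^ (2 ^ m + 1) = 1 ∧
        (a₁ + a₂) ^ 2 ^ (m - 1) + β₂ * (β₁ * u + (β₁ * u) ^ 2 ^ m) = 0}.ncard = 2 →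
      ∑ x : F, Bvec m n a₁ b₁ x * Bvec m n a₂ b₂ x = 1 / 2 ^ m) := by
  subst hn
  have hm0 : 0 < m := hm ▸ Nat.mul_pos ht hr
  -- characteristic two
  have hchar2 : ringChar F = 2 := by
    obtain ⟨k, hp, hcard⟩ := FiniteField.card F (ringChar F)
    have hdvd : ringChar F ∣ 2 ^ (2 * m) := by
      rw [← hF, hcard]
      exact dvd_pow_self _ (by exact_mod_cast k.pos.ne')
    exact (Nat.prime_dvd_prime_iff_eq hp Nat.prime_two).1 (hp.dvd_of_dvd_pow hdvd)
  haveI : CharP F 2 := hchar2 ▸ ringChar.charP F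
  have hFrobn : ∀ x : F, x ^ 2 ^ (2 * m) = x := fun x => by
    rw [← hF]; exact FiniteField.pow_card x
  have hFrob : ∀ x : F, x ^ (2 ^ m * 2 ^ m) = x := fun x => by
    rw [← pow_add, ← two_mul]; exact hFrobn x
  set a : F := a₁ + a₂ with haeq
  set b : F := b₁ + b₂ with hbeq
  have ha₁m : a₁ ^ 2 ^ m = a₁ := by rw [hm]; exact pow_fix_mul t ha₁
  have ha₂m : a₂ ^ 2 ^ m = a₂ := by rw [hm]; exact pow_fix_mul t ha₂
  have ham : a ^ 2 ^ m = a := by rw [haeq, add_pow_char_pow, ha₁m, ha₂m]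
  -- x^(2^m+1) is fixed by 2^m-power Frobenius
  have hxq : ∀ x : F, (x ^ (2 ^ m + 1)) ^ 2 ^ m = x ^ (2 ^ m + 1) := by
    intro x
    rw [← pow_mul, add_mul, one_mul, pow_add, hFrob, ← pow_succ']
  -- the pointwise product of the two B-vectors
  have hprod : ∀ x : F, Bvec m (2 * m) a₁ b₁ x * Bvec m (2 * m) a₂ b₂ x =
      (1 / 2 ^ m : ℝ) ^ 2 *
        sgn (relTr 1 m (a * x ^ (2 ^ m + 1)) + relTr 1 (2 * m) (b * x)) := by
    intro x
    have hA₁ := boolean_of_sq (relTr_sq (z := a₁ * x ^ (2 ^ m + 1))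
      (by rw [mul_pow, ha₁m, hxq]))
    have hA₂ := boolean_of_sq (relTr_sq (z := a₂ * x ^ (2 ^ m + 1))
      (by rw [mul_pow, ha₂m, hxq]))
    have hB₁ := boolean_of_sq (relTr_sq (z := b₁ * x) (hFrobn _))
    have hB₂ := boolean_of_sq (relTr_sq (z := b₂ * x) (hFrobn _))
    rw [Bvec, Bvec]
    rw [show ∀ p q s t : ℝ, (p * q) * (s * t) = (p * s) * (q * t) from fun _ _ _ _ => by ring]
    rw [← sq]
    congr 1
    rw [← sgn_add (boolean_add hA₁ hB₁) (boolean_add hA₂ hB₂)]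
    congr 1
    rw [show relTr 1 m (a₁ * x ^ (2 ^ m + 1)) + relTr 1 (2 * m) (b₁ * x) +
        (relTr 1 m (a₂ * x ^ (2 ^ m + 1)) + relTr 1 (2 * m) (b₂ * x)) =
        (relTr 1 m (a₁ * x ^ (2 ^ m + 1)) + relTr 1 m (a₂ * x ^ (2 ^ m + 1))) +
        (relTr 1 (2 * m) (b₁ * x) + relTr 1 (2 * m) (b₂ * x)) from by ring]
    rw [← relTr_add, ← relTr_add, ← add_mul, ← add_mul]
  -- identify the two descriptions of the solution set
  have hset : {u : F | u ^ (2 ^ m + 1) = 1 ∧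
        (a₁ + a₂) ^ 2 ^ (m - 1) + β₂ * (β₁ * u + (β₁ * u) ^ 2 ^ m) = 0} =
      (({u : F | u ^ (2 ^ m + 1) = 1 ∧
        a ^ 2 ^ (m - 1) + (b * u + (b * u) ^ 2 ^ m) = 0} : Finset F) : Set F) := by
    ext u
    simp only [Set.mem_setOf_eq, Finset.coe_filter, Finset.mem_univ, true_and,
      Set.mem_setOf_eq]
    have harg : β₂ * (β₁ * u + (β₁ * u) ^ 2 ^ m) = b * u + (b * u) ^ 2 ^ m := by
      rw [hb]
      linear_combination (-(β₁ ^ 2 ^ m * u ^ 2 ^ m)) * hβ₂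
    rw [harg, ← haeq]
  set N : ℕ := ({u : F | u ^ (2 ^ m + 1) = 1 ∧
        a ^ 2 ^ (m - 1) + (b * u + (b * u) ^ 2 ^ m) = 0} : Finset F).card with hN
  have hncard : {u : F | u ^ (2 ^ m + 1) = 1 ∧
        (a₁ + a₂) ^ 2 ^ (m - 1) + β₂ * (β₁ * u + (β₁ * u) ^ 2 ^ m) = 0}.ncard = N := by
    rw [hset, Set.ncard_coe_finset]
  have hsum : ∑ x : F, Bvec m (2 * m) a₁ b₁ x * Bvec m (2 * m) a₂ b₂ x =
      (1 / 2 ^ m : ℝ) ^ 2 * (2 ^ m * (N : ℝ) - 2 ^ m) := by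
    rw [Finset.sum_congr rfl fun x _ => hprod x, ← Finset.mul_sum,
      main_sum hm0 hF a b ham]
  have h2m : (2 : ℝ) ^ m ≠ 0 := by positivity
  constructor
  · intro h0
    rw [hncard] at h0
    rw [hsum, h0]
    push_cast
    field_simp
    ring
  · intro h2
    rw [hncard] at h2
    rw [hsum, h2]
    push_cast
    field_simp
    ring
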